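/- Let M be a linear matroid over F₂ on ground set [n] with non-negative integer weight function w. Then the weighted rank function φ_w is entropic: there exist jointly distributed random variables Y₁,...,Yₙ such that for every nonempty A ⊆ [n], the joint entropy H((Y_e)_{e∈A}) equals φ_w(A). -/

import Mathlib

open Classical Finset Real

/-- Probability of an event under a weight function on a finite sample space. -/
noncomputable def Pr {Ω : Type*} [Fintype Ω] (p : Ω → ℝ) (E : Ω → Prop) : ℝ :=
  ∑ ω, if E ω then p ω else 0

/-- Shannon entropy (base 2) of a finite-valued random variable. -/
noncomputable def entH {Ω S : Type*} [Fintype Ω] [Fintype S] (p : Ω → ℝ) (f : Ω → S) : ℝ :=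
  -∑ s : S, Pr p (fun ω => f ω = s) * Real.logb 2 (Pr p (fun ω => f ω = s))

/-- Weighted rank function of the binary linear matroid with columns `v`. -/
noncomputable def phiLin {n m : ℕ} (v : Fin n → Fin m → ZMod 2) (w : Fin n → ℕ)
    (A : Finset (Fin n)) : ℝ :=
  sSup {x : ℝ | ∃ I : Finset (Fin n), I ⊆ A ∧
    LinearIndependent (ZMod 2) (fun i : I => v i) ∧ x = ∑ e ∈ I, (w e : ℝ)}

-- Lemma 1: domain equiv
lemma entH_comp_equiv {Ω₁ Ω₂ S : Type*} [Fintype Ω₁] [Fintype Ω₂] [Fintype S]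
    (q : Ω₁ ≃ Ω₂) (f : Ω₂ → S) (c : ℝ) :
    entH (fun _ : Ω₁ => c) (fun a => f (q a)) = entH (fun _ : Ω₂ => c) f := by
  unfold entH Pr
  congr 1
  refine Finset.sum_congr rfl fun s _ => ?_
  rw [q.sum_comp (fun b => if f b = s then c else 0)]

-- Lemma 2: codomain equiv
lemma entH_equiv_comp {Ω S S' : Type*} [Fintype Ω] [Fintype S] [Fintype S']
    (ψ : S ≃ S') (f : Ω → S) (p : Ω → ℝ) :
    entH p (fun a => ψ (f a)) = entH p f := by
  unfold entH
  rw [← ψ.sum_comp (fun s' => Pr p (fun ω => ψ (f ω) = s') * Real.logb 2 (Pr p (fun ω => ψ (f ω) = s')))]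
  congr 1
  refine Finset.sum_congr rfl fun s _ => ?_
  simp only [ψ.apply_eq_iff_eq]

-- Lemma 3: uniform distribution, equal fibers
lemma entH_uniform_eq_logb {Ω S : Type*} [Fintype Ω] [Nonempty Ω] [Fintype S]
    (G : Ω → S)
    (hfib : ∀ s t : S, (∃ a, G a = s) → (∃ a, G a = t) →
      Nat.card {a // G a = s} = Nat.card {a // G a = t}) :
    entH (fun _ : Ω => ((Fintype.card Ω : ℝ))⁻¹) G
      = Real.logb 2 (Nat.card (Set.range G)) := by
  classical
  set nΩ := Fintype.card Ω with hn
  have hn0 : 0 < nΩ := Fintype.card_pos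
  set c : S → ℕ := fun s => (univ.filter (fun a => G a = s)).card with hc
  have hPr : ∀ s, Pr (fun _ : Ω => (nΩ : ℝ)⁻¹) (fun a => G a = s) = (c s) * (nΩ:ℝ)⁻¹ := by
    intro s
    rw [Pr, ← Finset.sum_filter]
    simp [hc, mul_comm]
  -- fibers cardinality via Nat.card
  have hcNat : ∀ s, c s = Nat.card {a // G a = s} := by
    intro s
    rw [Nat.card_eq_fintype_card, Fintype.card_subtype]
  set Rng := univ.image G with hR
  obtain ⟨a₀⟩ := ‹Nonempty Ω›
  set s₀ := G a₀ with hs₀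
  set c₀ := c s₀ with hc₀
  have hceq : ∀ s ∈ Rng, c s = c₀ := by
    intro s hs
    obtain ⟨a, _, ha⟩ := Finset.mem_image.mp hs
    rw [hcNat s, hc₀, hcNat s₀]
    exact hfib s s₀ ⟨a, ha⟩ ⟨a₀, rfl⟩
  have hsum : ∑ s ∈ Rng, c s = nΩ := by
    rw [hn, ← Finset.card_univ]
    exact (Finset.card_eq_sum_card_fiberwise (fun a _ => Finset.mem_image_of_mem G (mem_univ a))).symm
  have htot : Rng.card * c₀ = nΩ := by
    rw [← hsum, Finset.sum_congr rfl hceq, Finset.sum_const, smul_eq_mul]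
  have hc₀pos : 0 < c₀ := by
    have : a₀ ∈ univ.filter (fun a => G a = s₀) := Finset.mem_filter.mpr ⟨mem_univ _, rfl⟩
    exact Finset.card_pos.mpr ⟨a₀, this⟩
  have hRpos : 0 < Rng.card := Finset.card_pos.mpr ⟨s₀, Finset.mem_image_of_mem G (mem_univ a₀)⟩
  -- range card
  have hrange : Nat.card (Set.range G) = Rng.card := by
    have : Set.range G = (Rng : Set S) := by
      rw [hR]; simp
    rw [this, Nat.card_coe_set_eq, Set.ncard_coe_finset]
  rw [hrange]
  unfold entH
  rw [← Finset.sum_subset (Finset.subset_univ Rng) (by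
    intro s _ hs
    have : c s = 0 := by
      rw [hc]
      refine Finset.card_eq_zero.mpr ?_
      refine Finset.filter_eq_empty_iff.mpr fun a _ => ?_
      exact fun h => hs (h ▸ Finset.mem_image_of_mem G (mem_univ a))
    rw [hPr, this]
    simp)]
  have hterm : ∀ s ∈ Rng, Pr (fun _ : Ω => (nΩ : ℝ)⁻¹) (fun a => G a = s)
      * Real.logb 2 (Pr (fun _ : Ω => (nΩ : ℝ)⁻¹) (fun a => G a = s))
      = ((c₀ : ℝ) * (nΩ:ℝ)⁻¹) * Real.logb 2 ((c₀:ℝ) * (nΩ:ℝ)⁻¹) := by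
    intro s hs
    rw [hPr, hceq s hs]
  rw [Finset.sum_congr rfl hterm, Finset.sum_const, nsmul_eq_mul]
  have hnne : (nΩ : ℝ) ≠ 0 := Nat.cast_ne_zero.mpr hn0.ne'
  have hcne : (c₀ : ℝ) ≠ 0 := Nat.cast_ne_zero.mpr hc₀pos.ne'
  have hprod : (Rng.card : ℝ) * ((c₀:ℝ) * (nΩ:ℝ)⁻¹) = 1 := by
    field_simp
    rw [← htot]; push_cast; ring
  have hfrac : (c₀:ℝ) * (nΩ:ℝ)⁻¹ = ((Rng.card : ℝ))⁻¹ := by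
    have hRne : (Rng.card : ℝ) ≠ 0 := Nat.cast_ne_zero.mpr hRpos.ne'
    field_simp at hprod ⊢
    linarith [hprod]
  rw [← mul_assoc, hprod, one_mul, hfrac, Real.logb_inv]
  ring

section Aux
variable {n m : ℕ} (v : Fin n → Fin m → ZMod 2) (w : Fin n → ℕ)

/-- max weight -/
def WW : ℕ := Finset.univ.sup w

lemma le_WW (e : Fin n) : w e ≤ WW w := Finset.le_sup (Finset.mem_univ e)

/-- sample space -/
abbrev OM (m : ℕ) (w : Fin n → ℕ) := Fin (WW w) → Fin m → ZMod 2

/-- rank of a subset -/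
noncomputable def rkv (s : Finset (Fin n)) : ℕ :=
  Module.finrank (ZMod 2) (Submodule.span (ZMod 2) (v '' ↑s))

/-- linear form for a single element -/
noncomputable def Zmap (e : Fin n) : OM m w →ₗ[ZMod 2] (Fin (w e) → ZMod 2) where
  toFun x := fun j => ∑ t, v e t * x (Fin.castLE (le_WW w e) j) t
  map_add' x y := by
    funext j
    simp [mul_add, Finset.sum_add_distrib]
  map_smul' c x := by
    funext j
    simp [Finset.mul_sum, mul_left_comm]

/-- combined map for a subset A -/
noncomputable def LAmap (A : Finset (Fin n)) :
    OM m w →ₗ[ZMod 2] (∀ e : A, Fin (w e.1) → ZMod 2) :=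
  LinearMap.pi (fun e => Zmap v w e.1)

/-- per-level matrix -/
def Mx (A : Finset (Fin n)) (j : Fin (WW w)) :
    Matrix {e : A // (j : ℕ) < w e.1} (Fin m) (ZMod 2) :=
  fun e' t => v e'.1.1 t

/-- per-level linear map -/
noncomputable def Bmap (A : Finset (Fin n)) (j : Fin (WW w)) :
    (Fin m → ZMod 2) →ₗ[ZMod 2] ({e : A // (j : ℕ) < w e.1} → ZMod 2) :=
  (Mx v w A j).mulVecLin

/-- the reshuffling equivalence -/
def tEq (A : Finset (Fin n)) :
    (∀ e : A, Fin (w e.1) → ZMod 2) ≃ (∀ j : Fin (WW w), {e : A // (j : ℕ) < w e.1} → ZMod 2) where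
  toFun g j e' := g e'.1 ⟨(j : ℕ), e'.2⟩
  invFun h e jj := h (Fin.castLE (le_WW w e.1) jj) ⟨e, jj.2⟩
  left_inv g := by
    funext e jj
    rfl
  right_inv h := by
    funext j e'
    rfl

lemma tEq_injective (A : Finset (Fin n)) : Function.Injective (tEq w A) :=
  (tEq w A).injective

lemma tEq_comp_LA (A : Finset (Fin n)) (x : OM m w) :
    tEq w A (LAmap v w A x) = Pi.map (fun j => Bmap v w A j) x := by
  funext j e'
  show ∑ t, v e'.1.1 t * x (Fin.castLE (le_WW w e'.1.1) ⟨(j:ℕ), e'.2⟩) t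
      = (Mx v w A j).mulVec (x j) e'
  simp [Matrix.mulVec, dotProduct, Mx]

end Aux

section Aux2
variable {n m : ℕ} (v : Fin n → Fin m → ZMod 2) (w : Fin n → ℕ)

lemma finrank_Bmap (A : Finset (Fin n)) (j : Fin (WW w)) :
    Module.finrank (ZMod 2) (LinearMap.range (Bmap v w A j))
      = rkv v (A.filter fun e => (j : ℕ) < w e) := by
  have h0 : Module.finrank (ZMod 2) (LinearMap.range (Bmap v w A j)) = (Mx v w A j).rank := rfl
  have hset : Set.range (Mx v w A j) = v '' ↑(A.filter fun e => (j : ℕ) < w e) := by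
    ext y
    constructor
    · rintro ⟨e', rfl⟩
      exact ⟨e'.1.1, by simp [Finset.mem_filter, e'.1.2, e'.2], rfl⟩
    · rintro ⟨x, hx, rfl⟩
      simp only [Finset.coe_filter, Set.mem_setOf_eq, Finset.mem_filter] at hx
      exact ⟨⟨⟨x, hx.1⟩, hx.2⟩, rfl⟩
  rw [h0, ← Matrix.rank_transpose (Mx v w A j), Matrix.rank_eq_finrank_span_cols,
    Matrix.col_transpose, Matrix.row, rkv, hset]

lemma natcard_range_LA (A : Finset (Fin n)) :
    Nat.card (Set.range (LAmap v w A))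
      = 2 ^ (∑ j : Fin (WW w), rkv v (A.filter fun e => (j : ℕ) < w e)) := by
  classical
  have h1 : (tEq w A) ∘ (LAmap v w A) = Pi.map (fun j => Bmap v w A j) := by
    funext x
    exact tEq_comp_LA v w A x
  have h2 : Nat.card (Set.range (LAmap v w A))
      = Nat.card (Set.range ((tEq w A) ∘ (LAmap v w A))) := by
    rw [Set.range_comp, Nat.card_image_of_injective (tEq w A).injective]
  rw [h2, h1, Set.range_piMap]
  have h3 : Nat.card (Set.univ.pi fun j => Set.range (Bmap v w A j))
      = ∏ j : Fin (WW w), Nat.card (Set.range (Bmap v w A j)) := by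
    rw [Nat.card_congr (Equiv.Set.univPi _), Nat.card_pi]
  rw [h3]
  rw [← Finset.prod_pow_eq_pow_sum]
  refine Finset.prod_congr rfl fun j _ => ?_
  have h4 : Nat.card (Set.range (Bmap v w A j)) = Nat.card (LinearMap.range (Bmap v w A j)) :=
    Nat.card_congr (Equiv.subtypeEquivRight (fun x => by simp [LinearMap.mem_range]))
  rw [h4, Nat.card_eq_fintype_card, Module.card_eq_pow_finrank (K := ZMod 2), finrank_Bmap]
  rw [ZMod.card]

end Aux2

section Aux3
variable {n m : ℕ} (v : Fin n → Fin m → ZMod 2) (w : Fin n → ℕ)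

/-- independence of an indexed subfamily -/
def vindep (s : Finset (Fin n)) : Prop := LinearIndependent (ZMod 2) (fun i : s => v i)

lemma vindep_injOn {s : Finset (Fin n)} (hs : vindep v s) : Set.InjOn v ↑s := by
  intro a ha b hb hab
  have := hs.injective (show (fun i : s => v i) ⟨a, ha⟩ = (fun i : s => v i) ⟨b, hb⟩ from hab)
  exact congrArg Subtype.val this

lemma vindep_image {s : Finset (Fin n)} (hs : vindep v s) :
    LinearIndependent (ZMod 2) (fun x : (v '' ↑s) => (x : Fin m → ZMod 2)) :=
  (linearIndepOn_iff_image (vindep_injOn v hs)).mp hs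

lemma rkv_eq_card {s : Finset (Fin n)} (hs : vindep v s) : rkv v s = s.card := by
  classical
  rw [rkv, finrank_span_set_eq_card (vindep_image v hs),
    ← Set.ncard_eq_toFinset_card', Set.ncard_image_of_injOn (vindep_injOn v hs),
    Set.ncard_coe_finset]

lemma vindep_subset {s t : Finset (Fin n)} (hst : s ⊆ t) (ht : vindep v t) : vindep v s := by
  unfold vindep at ht ⊢
  have := ht.comp (fun i : s => (⟨i.1, hst i.2⟩ : t))
    (fun a b hab => Subtype.ext (by simpa using congrArg Subtype.val hab))
  exact this

lemma rkv_mono {s t : Finset (Fin n)} (hst : s ⊆ t) : rkv v s ≤ rkv v t :=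
  Submodule.finrank_mono (Submodule.span_mono (Set.image_mono (Finset.coe_subset.mpr hst)))

lemma vindep_empty : vindep v ∅ := by
  haveI : IsEmpty ((∅ : Finset (Fin n)) : Type) := ⟨fun x => Finset.notMem_empty _ x.2⟩
  exact linearIndependent_empty_type

lemma vindep_insert {s : Finset (Fin n)} {e : Fin n} (hs : vindep v s)
    (he : v e ∉ Submodule.span (ZMod 2) (v '' ↑s)) : vindep v (insert e s) := by
  have hves : v e ∉ v '' ↑s := fun h => he (Submodule.subset_span h)
  have hinj : Set.InjOn v ↑(insert e s) := by
    rw [Finset.coe_insert]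
    intro a ha b hb hab
    rcases ha with rfl | ha <;> rcases hb with rfl | hb
    · rfl
    · exact absurd (hab ▸ Set.mem_image_of_mem v hb) hves
    · exact absurd (hab ▸ Set.mem_image_of_mem v ha) hves
    · exact vindep_injOn v hs ha hb hab
  refine (linearIndepOn_iff_image hinj).mpr ?_
  have himg : v '' ↑(insert e s) = insert (v e) (v '' ↑s) := by
    rw [Finset.coe_insert, Set.image_insert_eq]
  rw [himg]
  exact LinearIndepOn.insert (v := id) (vindep_image v hs) (by simpa using he)

lemma exists_extend : ∀ (d : ℕ) (s t : Finset (Fin n)), (t \ s).card ≤ d → s ⊆ t → vindep v s →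
    ∃ u, s ⊆ u ∧ u ⊆ t ∧ vindep v u ∧
      Submodule.span (ZMod 2) (v '' ↑t) ≤ Submodule.span (ZMod 2) (v '' ↑u) := by
  intro d
  induction d with
  | zero =>
    intro s t hcard hst hs
    have hts : t ⊆ s := by
      intro x hx
      by_contra hxs
      have : x ∈ t \ s := Finset.mem_sdiff.mpr ⟨hx, hxs⟩
      have := Finset.card_pos.mpr ⟨x, this⟩
      omega
    exact ⟨s, subset_rfl, hst, hs,
      Submodule.span_mono (Set.image_mono (Finset.coe_subset.mpr hts))⟩
  | succ d ih =>
    intro s t hcard hst hs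
    by_cases hall : ∀ e ∈ t, v e ∈ Submodule.span (ZMod 2) (v '' ↑s)
    · refine ⟨s, subset_rfl, hst, hs, Submodule.span_le.mpr ?_⟩
      rintro y ⟨x, hx, rfl⟩
      exact hall x hx
    · push_neg at hall
      obtain ⟨e, het, hespan⟩ := hall
      have hes : e ∉ s := fun h => hespan (Submodule.subset_span ⟨e, h, rfl⟩)
      have hs' := vindep_insert v hs hespan
      have hsub : insert e s ⊆ t := Finset.insert_subset het hst
      have hmem : e ∈ t \ s := Finset.mem_sdiff.mpr ⟨het, hes⟩
      have hcard' : (t \ insert e s).card ≤ d := by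
        rw [Finset.sdiff_insert, Finset.card_erase_of_mem hmem]
        have := Finset.card_pos.mpr ⟨e, hmem⟩
        omega
      obtain ⟨u, h1, h2, h3, h4⟩ := ih (insert e s) t hcard' hsub hs'
      exact ⟨u, (Finset.subset_insert e s).trans h1, h2, h3, h4⟩

end Aux3

section Aux4
variable {n m : ℕ} (v : Fin n → Fin m → ZMod 2) (w : Fin n → ℕ)

lemma card_le_rkv {s t : Finset (Fin n)} (hst : s ⊆ t) (hs : vindep v s) :
    s.card ≤ rkv v t := by
  rw [← rkv_eq_card v hs]
  exact rkv_mono v hst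

lemma sum_w_le (A I : Finset (Fin n)) (hIA : I ⊆ A) (hI : vindep v I) :
    ∑ e ∈ I, w e ≤ ∑ j ∈ Finset.range (WW w), rkv v (A.filter fun e => j < w e) := by
  classical
  have h1 : ∀ e ∈ I, w e = ∑ j ∈ Finset.range (WW w), if j < w e then 1 else 0 := by
    intro e _
    rw [← Finset.card_filter]
    have : (Finset.range (WW w)).filter (fun j => j < w e) = Finset.range (w e) := by
      ext j
      simp only [Finset.mem_filter, Finset.mem_range]
      constructor
      · rintro ⟨_, h⟩; exact h
      · intro h; exact ⟨lt_of_lt_of_le h (le_WW w e), h⟩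
    rw [this, Finset.card_range]
  rw [Finset.sum_congr rfl h1, Finset.sum_comm]
  refine Finset.sum_le_sum fun j _ => ?_
  rw [← Finset.card_filter]
  exact card_le_rkv v (Finset.filter_subset_filter _ hIA)
    (vindep_subset v (Finset.filter_subset _ _) hI)

lemma exists_chain (A : Finset (Fin n)) :
    ∀ d : ℕ, d ≤ WW w → ∃ u : Finset (Fin n),
      u ⊆ A.filter (fun e => WW w - d < w e) ∧ vindep v u ∧
      ∑ j ∈ Finset.Ico (WW w - d) (WW w), rkv v (A.filter fun e => j < w e)
        ≤ ∑ e ∈ u, (w e - (WW w - d)) := by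
  intro d
  induction d with
  | zero =>
    intro _
    exact ⟨∅, Finset.empty_subset _, vindep_empty v, by simp⟩
  | succ d ih =>
    intro hd1
    obtain ⟨u, hu1, hu2, hu3⟩ := ih (by omega)
    obtain ⟨c', hc'⟩ : ∃ c', c' = WW w - (d + 1) := ⟨_, rfl⟩
    obtain ⟨c, hcq⟩ : ∃ c, c = WW w - d := ⟨_, rfl⟩
    rw [← hcq] at hu1 hu3
    rw [← hc']
    have hcc : c = c' + 1 := by omega
    have hc'W : c' < WW w := by omega
    have hLL : A.filter (fun e => c < w e) ⊆ A.filter (fun e => c' < w e) := by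
      intro x hx
      rw [Finset.mem_filter] at hx ⊢
      exact ⟨hx.1, by omega⟩
    obtain ⟨u', hu'1, hu'2, hu'3, hu'4⟩ := exists_extend v
      (((A.filter (fun e => c' < w e)) \ u).card) u (A.filter (fun e => c' < w e))
      le_rfl (hu1.trans hLL) hu2
    have hrk : rkv v (A.filter fun e => c' < w e) ≤ u'.card := by
      rw [← rkv_eq_card v hu'3]
      exact Submodule.finrank_mono hu'4
    have hsum1 : ∑ j ∈ Finset.Ico c' (WW w), rkv v (A.filter fun e => j < w e)
        = rkv v (A.filter fun e => c' < w e)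
          + ∑ j ∈ Finset.Ico (c' + 1) (WW w), rkv v (A.filter fun e => j < w e) :=
      Finset.sum_eq_sum_Ico_succ_bot hc'W _
    have hsplit : ∑ e ∈ u', (w e - c') = ∑ e ∈ u' \ u, (w e - c') + ∑ e ∈ u, (w e - c') :=
      (Finset.sum_sdiff hu'1).symm
    have h6 : ∑ e ∈ u, (w e - c') = ∑ e ∈ u, (w e - c) + u.card := by
      have hub : ∀ e ∈ u, w e - c' = (w e - c) + 1 := by
        intro e he
        have := (Finset.mem_filter.mp (hu1 he)).2
        omega
      rw [Finset.sum_congr rfl hub, Finset.sum_add_distrib, Finset.sum_const, smul_eq_mul, mul_one]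
    have h7 : u'.card - u.card ≤ ∑ e ∈ u' \ u, (w e - c') := by
      rw [← Finset.card_sdiff_of_subset hu'1]
      calc (u' \ u).card = ∑ _e ∈ u' \ u, 1 := by simp
        _ ≤ ∑ e ∈ u' \ u, (w e - c') := by
            refine Finset.sum_le_sum fun e he => ?_
            have h8 := (Finset.mem_filter.mp (hu'2 (Finset.mem_sdiff.mp he).1)).2
            omega
    have hcard_le : u.card ≤ u'.card := Finset.card_le_card hu'1
    refine ⟨u', hu'2, hu'3, ?_⟩
    rw [hsum1, ← hcc]
    omega

end Aux4

section Aux5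
variable {n m : ℕ} (v : Fin n → Fin m → ZMod 2) (w : Fin n → ℕ)

lemma phiLin_eq (A : Finset (Fin n)) :
    phiLin v w A
      = ((∑ j ∈ Finset.range (WW w), rkv v (A.filter fun e => j < w e) : ℕ) : ℝ) := by
  apply IsGreatest.csSup_eq
  constructor
  · -- membership
    obtain ⟨u, hu1, hu2, hu3⟩ := exists_chain v w A (WW w) le_rfl
    rw [Nat.sub_self] at hu1 hu3
    have huA : u ⊆ A := hu1.trans (Finset.filter_subset _ _)
    simp only [Nat.sub_zero, ← Finset.range_eq_Ico] at hu3
    have hle := sum_w_le v w A u huA hu2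
    have heq : ∑ e ∈ u, w e = ∑ j ∈ Finset.range (WW w), rkv v (A.filter fun e => j < w e) :=
      le_antisymm hle hu3
    refine ⟨u, huA, hu2, ?_⟩
    rw [← heq]
    push_cast
    rfl
  · rintro x ⟨I, hIA, hI, rfl⟩
    have := sum_w_le v w A I hIA hI
    calc ∑ e ∈ I, (w e : ℝ) = ((∑ e ∈ I, w e : ℕ) : ℝ) := by push_cast; rfl
      _ ≤ _ := by exact_mod_cast this

end Aux5

theorem weighted_rank_entropic (n m : ℕ) (v : Fin n → Fin m → ZMod 2) (w : Fin n → ℕ) :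
    ∃ (N : ℕ) (p : Fin N → ℝ) (k : Fin n → ℕ) (Y : ∀ i : Fin n, Fin N → Fin (k i)),
      (∀ ω, 0 ≤ p ω) ∧ (∑ ω, p ω = 1) ∧
      ∀ A : Finset (Fin n), A.Nonempty →
        entH p (fun ω => fun e : A => Y e ω) = phiLin v w A := by
  classical
  set cst : ℝ := ((Fintype.card (OM m w) : ℝ))⁻¹ with hcst
  set q : Fin (Fintype.card (OM m w)) ≃ OM m w := (Fintype.equivFin (OM m w)).symm with hq
  set enc : ∀ e : Fin n, (Fin (w e) → ZMod 2) ≃ Fin (Fintype.card (Fin (w e) → ZMod 2)) :=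
    fun e => Fintype.equivFin _ with henc
  refine ⟨Fintype.card (OM m w), fun _ => cst,
    fun e => Fintype.card (Fin (w e) → ZMod 2),
    fun e ω => enc e (Zmap v w e (q ω)), ?_, ?_, ?_⟩
  · intro ω
    positivity
  · rw [Finset.sum_const, Finset.card_univ, Fintype.card_fin, nsmul_eq_mul, hcst,
      mul_inv_cancel₀]
    exact Nat.cast_ne_zero.mpr Fintype.card_ne_zero
  · intro A _
    set ψ : (∀ e : A, Fin (w e.1) → ZMod 2) ≃ (∀ e : A, Fin (Fintype.card (Fin (w e.1) → ZMod 2))) :=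
      Equiv.piCongrRight (fun e : A => enc e.1) with hψ
    have hYG : (fun ω => fun e : A => enc e.1 (Zmap v w e.1 (q ω)))
        = (fun ω => ψ (LAmap v w A (q ω))) := rfl
    rw [hYG]
    rw [entH_comp_equiv q (fun x => ψ (LAmap v w A x)) cst]
    rw [entH_equiv_comp ψ (fun x => LAmap v w A x) (fun _ => cst)]
    have hfib : ∀ s t, (∃ a, LAmap v w A a = s) → (∃ a, LAmap v w A a = t) →
        Nat.card {a // LAmap v w A a = s} = Nat.card {a // LAmap v w A a = t} := by
      rintro s t ⟨a, rfl⟩ ⟨b, rfl⟩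
      apply Nat.card_congr
      refine ⟨fun x => ⟨x.1 + b - a, ?_⟩, fun x => ⟨x.1 + a - b, ?_⟩, ?_, ?_⟩
      · rw [map_sub, map_add, x.2]; abel
      · rw [map_sub, map_add, x.2]; abel
      · intro x; apply Subtype.ext; show x.1 + b - a + a - b = x.1; abel
      · intro x; apply Subtype.ext; show x.1 + a - b + b - a = x.1; abel
    have h3 := entH_uniform_eq_logb (⇑(LAmap v w A)) hfib
    rw [hcst]
    rw [h3, natcard_range_LA]
    rw [phiLin_eq v w A, ← Fin.sum_univ_eq_sum_range (fun j => rkv v (A.filter fun e => j < w e))]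
    push_cast
    rw [Real.logb_pow, Real.logb_self_eq_one (by norm_num)]
    push_cast
    ring
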